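/- Let P and Q be d×d complex matrices that are orthogonal projections (Pᴴ = P, P² = P, Qᴴ = Q, Q² = Q), let φ ∈ ℂ^d be a unit vector, and let c be a nonzero real number such that P − Q = c·φφᴴ. Then c = 1 or c = −1, φ is an eigenvector of P (with eigenvalue 1 if c = 1 and eigenvalue 0 if c = −1), and P and Q commute: PQ = QP. -/

import Mathlib

open Matrix Kronecker ComplexOrder

noncomputable section

/-- The positive semidefinite square root (as `Matrix.PosSemidef.sqrt` was defined in Mathlib, Dec 2024). -/
noncomputable def Matrix.PosSemidef.sqrt {n : Type*} [Fintype n] [DecidableEq n] {A : Matrix n n ℂ}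
    (hA : A.PosSemidef) : Matrix n n ℂ :=
  (hA.1.eigenvectorUnitary : Matrix n n ℂ) *
    diagonal (fun i => ((Real.sqrt (hA.1.eigenvalues i) : ℝ) : ℂ)) *
    (star hA.1.eigenvectorUnitary : Matrix n n ℂ)

/-- The matrix absolute value `|A| = √(AᴴA)`. -/
noncomputable def matAbs {n : Type*} [Fintype n] [DecidableEq n] (A : Matrix n n ℂ) :
    Matrix n n ℂ :=
  (Matrix.posSemidef_conjTranspose_mul_self A).sqrt

/-- The trace norm `‖A‖₁ = Tr √(AᴴA)`. -/
noncomputable def traceNorm {n : Type*} [Fintype n] [DecidableEq n] (A : Matrix n n ℂ) : ℝ :=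
  ((matAbs A).trace).re

/-- The positive semidefinite square root of a PSD matrix (zero otherwise). -/
noncomputable def matSqrt {n : Type*} [Fintype n] [DecidableEq n] (σ : Matrix n n ℂ) :
    Matrix n n ℂ :=
  open scoped Classical in
  if h : σ.PosSemidef then h.sqrt else 0

/-- A density matrix: positive semidefinite with unit trace. -/
def IsDensity {n : Type*} [Fintype n] [DecidableEq n] (σ : Matrix n n ℂ) : Prop :=
  σ.PosSemidef ∧ σ.trace = 1

/-- The Choi operator of a linear map between matrix algebras. -/
noncomputable def choi {d m : ℕ}
    (S : Matrix (Fin d) (Fin d) ℂ →ₗ[ℂ] Matrix (Fin m) (Fin m) ℂ) :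
    Matrix (Fin m × Fin d) (Fin m × Fin d) ℂ :=
  ∑ i : Fin d, ∑ j : Fin d,
    (S (Matrix.single i j 1)) ⊗ₖ (Matrix.single i j 1)

/-- The ME-norm `‖S‖_ME = ‖J(S)‖₁ / d`. -/
noncomputable def MENorm {d m : ℕ}
    (S : Matrix (Fin d) (Fin d) ℂ →ₗ[ℂ] Matrix (Fin m) (Fin m) ℂ) : ℝ :=
  traceNorm (choi S) / d

/-- The diamond norm: supremum over density matrices σ of
`‖(1 ⊗ √σ) J(S) (1 ⊗ √σ)‖₁`. -/
noncomputable def diamondNorm {d m : ℕ}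
    (S : Matrix (Fin d) (Fin d) ℂ →ₗ[ℂ] Matrix (Fin m) (Fin m) ℂ) : ℝ :=
  ⨆ σ : {σ : Matrix (Fin d) (Fin d) ℂ // IsDensity σ},
    traceNorm (((1 : Matrix (Fin m) (Fin m) ℂ) ⊗ₖ matSqrt σ.1) * choi S *
      ((1 : Matrix (Fin m) (Fin m) ℂ) ⊗ₖ matSqrt σ.1))

/-- The M-operator `M(S) = Tr_B |J(S)|`. -/
noncomputable def Mop {d m : ℕ}
    (S : Matrix (Fin d) (Fin d) ℂ →ₗ[ℂ] Matrix (Fin m) (Fin m) ℂ) :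
    Matrix (Fin d) (Fin d) ℂ :=
  Matrix.of fun k l => ∑ b : Fin m, matAbs (choi S) (b, k) (b, l)

/-- A quantum channel: completely positive (PSD Choi operator, by Choi's theorem)
and trace preserving. -/
def IsQChannel {d m : ℕ}
    (S : Matrix (Fin d) (Fin d) ℂ →ₗ[ℂ] Matrix (Fin m) (Fin m) ℂ) : Prop :=
  (choi S).PosSemidef ∧ ∀ ρ : Matrix (Fin d) (Fin d) ℂ, (S ρ).trace = ρ.trace


lemma vmv_mulVec {d : ℕ} (u v w : Fin d → ℂ) :
    Matrix.vecMulVec u v *ᵥ w = (v ⬝ᵥ w) • u := by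
  ext i
  simp [Matrix.mulVec, Matrix.vecMulVec_apply, dotProduct, Finset.sum_mul, Finset.mul_sum]
  apply Finset.sum_congr rfl; intros; ring

lemma mul_vmv {d : ℕ} (M : Matrix (Fin d) (Fin d) ℂ) (u v : Fin d → ℂ) :
    M * Matrix.vecMulVec u v = Matrix.vecMulVec (M *ᵥ u) v := by
  ext i j
  simp [Matrix.mul_apply, Matrix.vecMulVec_apply, Matrix.mulVec, dotProduct, Finset.sum_mul]
  apply Finset.sum_congr rfl; intros; ring

lemma vmv_mul {d : ℕ} (M : Matrix (Fin d) (Fin d) ℂ) (u v : Fin d → ℂ) :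
    Matrix.vecMulVec u v * M = Matrix.vecMulVec u (v ᵥ* M) := by
  ext i j
  simp [Matrix.mul_apply, Matrix.vecMulVec_apply, Matrix.vecMul, dotProduct, Finset.mul_sum]
  apply Finset.sum_congr rfl; intros; ring

lemma vmv_smul_left {d : ℕ} (t : ℂ) (u v : Fin d → ℂ) :
    Matrix.vecMulVec (t • u) v = t • Matrix.vecMulVec u v := by
  ext i j; simp [Matrix.vecMulVec_apply, mul_assoc]

lemma vmv_smul_right {d : ℕ} (t : ℂ) (u v : Fin d → ℂ) :
    Matrix.vecMulVec u (t • v) = t • Matrix.vecMulVec u v := by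
  ext i j; simp [Matrix.vecMulVec_apply]; ring


/-- if `P`, `Q` are orthogonal projections with `P − Q = c·φφᴴ`
for a unit vector `φ` and nonzero real `c`, then `c = ±1`, `φ` is an eigenvector
of `P` (eigenvalue 1 if `c = 1`, eigenvalue 0 if `c = −1`), and `PQ = QP`. -/
theorem stmt14 {d : ℕ} (P Q : Matrix (Fin d) (Fin d) ℂ)
    (hPh : P.IsHermitian) (hPp : P * P = P)
    (hQh : Q.IsHermitian) (hQp : Q * Q = Q)
    (φ : Fin d → ℂ) (hφ : star φ ⬝ᵥ φ = 1)
    (c : ℝ) (hc : c ≠ 0)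
    (hPQ : P - Q = (c : ℂ) • Matrix.vecMulVec φ (star φ)) :
    (c = 1 ∨ c = -1)
    ∧ (c = 1 → P *ᵥ φ = φ)
    ∧ (c = -1 → P *ᵥ φ = 0)
    ∧ P * Q = Q * P := by
  set R := Matrix.vecMulVec φ (star φ) with hR
  set v := P *ᵥ φ with hv
  obtain ⟨a, ha⟩ : ∃ a : ℂ, star φ ⬝ᵥ v = a := ⟨_, rfl⟩
  have hcC : (c : ℂ) ≠ 0 := by exact_mod_cast hc
  have hQ : Q = P - (c : ℂ) • R := by rw [← hPQ, sub_sub_cancel]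
  have hRφ : R *ᵥ φ = φ := by rw [hR, vmv_mulVec, hφ, one_smul]
  have hRv : R *ᵥ v = a • φ := by rw [hR, vmv_mulVec, ha]
  have hQφ : Q *ᵥ φ = v - (c : ℂ) • φ := by
    rw [hQ, Matrix.sub_mulVec, Matrix.smul_mulVec, hRφ, hv]
  have hPv : P *ᵥ v = v := by rw [hv, Matrix.mulVec_mulVec, hPp]
  have hQQφ : Q *ᵥ (Q *ᵥ φ) = Q *ᵥ φ := by rw [Matrix.mulVec_mulVec, hQp]
  have key : v - (c : ℂ) • v - ((c : ℂ) * a) • φ + ((c : ℂ) * c) • φ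
      = v - (c : ℂ) • φ := by
    have h0 := hQQφ
    rw [hQφ, hQ, Matrix.sub_mulVec, Matrix.smul_mulVec,
      Matrix.mulVec_sub, Matrix.mulVec_smul, hPv,
      Matrix.mulVec_sub, Matrix.mulVec_smul, hRv, hRφ] at h0
    rw [← h0]
    module
  have key2 : v + a • φ = ((c : ℂ) + 1) • φ := by
    have h3 : (c : ℂ) • (v + a • φ) = (c : ℂ) • (((c : ℂ) + 1) • φ) := by
      linear_combination (norm := module) -key
    exact smul_right_injective _ hcC h3
  have hav : v = ((c : ℂ) + 1 - a) • φ := by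
    linear_combination (norm := module) key2
  have haval : a = ((c : ℂ) + 1) / 2 := by
    have h5 : star φ ⬝ᵥ v = star φ ⬝ᵥ (((c : ℂ) + 1 - a) • φ) := by rw [← hav]
    rw [ha, dotProduct_smul, hφ, smul_eq_mul, mul_one] at h5
    linear_combination h5 / 2
  set t : ℂ := ((c : ℂ) + 1) / 2 with ht
  have hvt : v = t • φ := by rw [hav, haval, ht]; congr 1; ring
  have htt : t * t = t := by
    have h6 : (t * t) • φ = t • φ := by
      calc (t * t) • φ = t • (t • φ) := by rw [smul_smul]
        _ = t • v := by rw [hvt]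
        _ = t • (P *ᵥ φ) := by rw [hv]
        _ = P *ᵥ (t • φ) := (Matrix.mulVec_smul P t φ).symm
        _ = P *ᵥ v := by rw [← hvt]
        _ = v := hPv
        _ = t • φ := hvt
    have h7 : star φ ⬝ᵥ ((t * t) • φ) = star φ ⬝ᵥ (t • φ) := by rw [h6]
    rw [dotProduct_smul, dotProduct_smul, hφ] at h7
    simpa using h7
  have ht01 : t = 0 ∨ t = 1 := by
    rcases mul_eq_zero.mp (show t * (t - 1) = 0 by linear_combination htt) with h | h
    · left; exact h
    · right; linear_combination h
  have hcases : (c : ℂ) = 1 ∨ (c : ℂ) = -1 := by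
    rcases ht01 with h | h
    · right; rw [ht] at h; linear_combination 2 * h
    · left; rw [ht] at h; linear_combination 2 * h
  have hcr : c = 1 ∨ c = -1 := by
    rcases hcases with h | h
    · left; exact_mod_cast h
    · right; exact_mod_cast h
  -- eigenvector statements
  have e1 : c = 1 → P *ᵥ φ = φ := by
    intro h; rw [← hv, hvt, ht, h]; norm_num
  have e2 : c = -1 → P *ᵥ φ = 0 := by
    intro h; rw [← hv, hvt, ht, h]; norm_num
  -- commutation
  have hconj : star v = t • star φ := by
    rw [hvt]; ext i
    simp [Pi.star_apply, Pi.smul_apply, smul_eq_mul, ht, map_div₀, Complex.conj_ofReal,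
      mul_comm]
  have hvmP : star φ ᵥ* P = t • star φ := by
    have := Matrix.star_mulVec (M := P) (v := φ)
    rw [hPh.eq] at this
    rw [← this, hconj]
  have hPR : P * R = t • R := by
    rw [hR, mul_vmv, ← hv, hvt, vmv_smul_left]
  have hRP : R * P = t • R := by
    rw [hR, vmv_mul, hvmP, vmv_smul_right]
  have hcomm : P * Q = Q * P := by
    rw [hQ, mul_sub, sub_mul, hPp, mul_smul_comm, smul_mul_assoc, hPR, hRP]
  exact ⟨hcr, e1, e2, hcomm⟩

end
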